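/- Let G be a graph containing a pendant triangle (u, v, w), i.e., u, v, w are pairwise adjacent and deg(u) = deg(w) = 2. Then for every ℓ, G has an induced matching of size ℓ if and only if G − v has an induced matching of size ℓ. -/

import Mathlib

variable {V : Type*}

/-- `M` is a matching in `G`: a finite set of edges of `G` that are pairwise non-incident. -/
def IsMatchingSet (G : SimpleGraph V) (M : Finset (Sym2 V)) : Prop :=
  (∀ e ∈ M, e ∈ G.edgeSet) ∧
  ∀ e ∈ M, ∀ f ∈ M, e ≠ f → ∀ v : V, v ∈ e → v ∉ f

/-- `M` is an induced matching in `G`: a matching such that no edge of `G`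
joins two distinct edges of `M`. -/
def IsInducedMatchingSet (G : SimpleGraph V) (M : Finset (Sym2 V)) : Prop :=
  IsMatchingSet G M ∧
  ∀ e ∈ M, ∀ f ∈ M, e ≠ f → ∀ a ∈ e, ∀ b ∈ f, ¬ G.Adj a b

/-- `S` is an independent set in `G`. -/
def IsIndepFinset (G : SimpleGraph V) (S : Finset V) : Prop :=
  ∀ a ∈ S, ∀ b ∈ S, ¬ G.Adj a b

/-- Maximum matching size `MM(G)`. -/
noncomputable def MMn (G : SimpleGraph V) : ℕ :=
  sSup {n | ∃ M : Finset (Sym2 V), IsMatchingSet G M ∧ M.card = n}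

/-- Maximum induced matching size `IM(G)`. -/
noncomputable def IMn (G : SimpleGraph V) : ℕ :=
  sSup {n | ∃ M : Finset (Sym2 V), IsInducedMatchingSet G M ∧ M.card = n}

/-- Maximum independent set size `IS(G)`. -/
noncomputable def ISn (G : SimpleGraph V) : ℕ :=
  sSup {n | ∃ S : Finset V, IsIndepFinset G S ∧ S.card = n}

lemma mem_attachWith' {α : Type*} {P : α → Prop} {e : Sym2 α} (h : ∀ a ∈ e, P a)
    (x : {a // P a}) : x ∈ e.attachWith h ↔ (x : α) ∈ e := by
  induction' e with a b
  rw [Sym2.attachWith, Sym2.pmap_pair]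
  simp only [Sym2.mem_iff]
  constructor
  · rintro (rfl | rfl) <;> simp
  · rintro (hx | hx) <;> [left; right] <;> exact Subtype.ext hx

lemma supported_iff (G : SimpleGraph V) (s : Set V) (ℓ : ℕ) :
    (∃ M : Finset (Sym2 V), IsInducedMatchingSet G M ∧ (∀ e ∈ M, ∀ x ∈ e, x ∈ s) ∧ M.card = ℓ) ↔
    (∃ M : Finset (Sym2 s), IsInducedMatchingSet (G.induce s) M ∧ M.card = ℓ) := by
  constructor
  · rintro ⟨M, ⟨⟨hedge, hmatch⟩, hind⟩, hsupp, hcard⟩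
    refine ⟨M.attach.map ⟨fun e => e.1.attachWith (hsupp e.1 e.2), ?_⟩, ⟨⟨?_, ?_⟩, ?_⟩, ?_⟩
    · suffices hinj : Function.Injective (fun e : M => e.1.attachWith (hsupp e.1 e.2)) from hinj
      rintro ⟨e0, he0⟩ ⟨f0, hf0⟩ h
      simp only at h
      have := congrArg (Sym2.map Subtype.val) h
      simp only [Sym2.attachWith_map_subtypeVal] at this
      exact Subtype.ext this
    · rintro e he
      simp only [Finset.mem_map, Finset.mem_attach, true_and, Subtype.exists, Function.Embedding.coeFn_mk] at he
      obtain ⟨e0, he0, rfl⟩ := he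
      have := hedge e0 he0
      induction' e0 with a b
      rw [Sym2.attachWith, Sym2.pmap_pair]
      exact G.mem_edgeSet.mpr (by simpa using this)
    · rintro e he f hf hne x hx hxf
      simp only [Finset.mem_map, Finset.mem_attach, true_and, Subtype.exists, Function.Embedding.coeFn_mk] at he hf
      obtain ⟨e0, he0, rfl⟩ := he
      obtain ⟨f0, hf0, rfl⟩ := hf
      rw [mem_attachWith'] at hx hxf
      have hne0 : e0 ≠ f0 := by
        rintro rfl; exact hne rfl
      exact hmatch e0 he0 f0 hf0 hne0 x hx hxf
    · rintro e he f hf hne a ha b hb hab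
      simp only [Finset.mem_map, Finset.mem_attach, true_and, Subtype.exists, Function.Embedding.coeFn_mk] at he hf
      obtain ⟨e0, he0, rfl⟩ := he
      obtain ⟨f0, hf0, rfl⟩ := hf
      rw [mem_attachWith'] at ha hb
      have hne0 : e0 ≠ f0 := by rintro rfl; exact hne rfl
      exact hind e0 he0 f0 hf0 hne0 a ha b hb hab
    · rw [Finset.card_map, Finset.card_attach, hcard]
  · rintro ⟨M, ⟨⟨hedge, hmatch⟩, hind⟩, hcard⟩
    refine ⟨M.map ⟨Sym2.map Subtype.val, Sym2.map.injective Subtype.val_injective⟩,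
      ⟨⟨?_, ?_⟩, ?_⟩, ?_, ?_⟩
    · rintro e he
      simp only [Finset.mem_map, Function.Embedding.coeFn_mk] at he
      obtain ⟨e0, he0, rfl⟩ := he
      have := hedge e0 he0
      induction' e0 with a b
      rw [Sym2.map_pair_eq]
      exact (SimpleGraph.induce s G).mem_edgeSet.mpr (by simpa using this)
    · rintro e he f hf hne x hx hxf
      simp only [Finset.mem_map, Function.Embedding.coeFn_mk] at he hf
      obtain ⟨e0, he0, rfl⟩ := he
      obtain ⟨f0, hf0, rfl⟩ := hf
      rw [Sym2.mem_map] at hx hxf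
      obtain ⟨a, ha, rfl⟩ := hx
      obtain ⟨b, hb, hba⟩ := hxf
      have hne0 : e0 ≠ f0 := by rintro rfl; exact hne rfl
      have hab : a = b := Subtype.ext hba.symm
      exact hmatch e0 he0 f0 hf0 hne0 a ha (hab ▸ hb)
    · rintro e he f hf hne a ha b hb hab
      simp only [Finset.mem_map, Function.Embedding.coeFn_mk] at he hf
      obtain ⟨e0, he0, rfl⟩ := he
      obtain ⟨f0, hf0, rfl⟩ := hf
      rw [Sym2.mem_map] at ha hb
      obtain ⟨a0, ha0, rfl⟩ := ha
      obtain ⟨b0, hb0, rfl⟩ := hb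
      have hne0 : e0 ≠ f0 := by rintro rfl; exact hne rfl
      exact hind e0 he0 f0 hf0 hne0 a0 ha0 b0 hb0 hab
    · rintro e he x hx
      simp only [Finset.mem_map, Function.Embedding.coeFn_mk] at he
      obtain ⟨e0, he0, rfl⟩ := he
      rw [Sym2.mem_map] at hx
      obtain ⟨a0, _, rfl⟩ := hx
      exact a0.2
    · rw [Finset.card_map, hcard]

/-- Reduction rule for a pendant triangle `(u, v, w)`: deleting `v` preserves the
existence of an induced matching of size `ℓ`. -/
theorem stmt_4 {V : Type*} [Fintype V] (G : SimpleGraph V) (u v w : V)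
    (huv : G.Adj u v) (hvw : G.Adj v w) (huw : G.Adj u w)
    (hu : G.neighborSet u = {v, w}) (hw : G.neighborSet w = {u, v}) (ℓ : ℕ) :
    (∃ M : Finset (Sym2 V), IsInducedMatchingSet G M ∧ M.card = ℓ) ↔
    (∃ M : Finset (Sym2 ({x : V | x ≠ v} : Set V)),
      IsInducedMatchingSet (G.induce {x : V | x ≠ v}) M ∧ M.card = ℓ) := by
  classical
  rw [← supported_iff G {x : V | x ≠ v} ℓ]
  constructor
  · rintro ⟨M, ⟨⟨hedge, hmatch⟩, hind⟩, hcard⟩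
    by_cases hv : ∀ e ∈ M, v ∉ e
    · exact ⟨M, ⟨⟨hedge, hmatch⟩, hind⟩,
        fun e he x hx hxv => hv e he (hxv ▸ hx), hcard⟩
    push_neg at hv
    obtain ⟨e, he, hve⟩ := hv
    -- key claims
    have claim1 : ∀ f ∈ M, e ≠ f → u ∉ f ∧ w ∉ f := by
      intro f hf hne
      constructor
      · intro huf; exact hind e he f hf hne v hve u huf huv.symm
      · intro hwf; exact hind e he f hf hne v hve w hwf hvw
    have hvnotf : ∀ f ∈ M, e ≠ f → v ∉ f := fun f hf hne => hmatch e he f hf hne v hve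
    have claim2 : ∀ f ∈ M, e ≠ f → ∀ b ∈ f, ¬ G.Adj u b ∧ ¬ G.Adj w b := by
      intro f hf hne b hb
      constructor
      · intro hadj
        have : b ∈ G.neighborSet u := hadj
        rw [hu] at this
        rcases this with rfl | rfl
        · exact hvnotf f hf hne hb
        · exact (claim1 f hf hne).2 hb
      · intro hadj
        have : b ∈ G.neighborSet w := hadj
        rw [hw] at this
        rcases this with rfl | rfl
        · exact (claim1 f hf hne).1 hb
        · exact hvnotf f hf hne hb
    set M2 : Finset (Sym2 V) := insert s(u, w) (M.erase e) with hM2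
    have huwnotin : s(u, w) ∉ M.erase e := by
      intro hmem
      rw [Finset.mem_erase] at hmem
      exact (claim1 _ hmem.2 (Ne.symm hmem.1)).1 (Sym2.mem_mk_left u w)
    have hmemM2 : ∀ g ∈ M2, g = s(u, w) ∨ (g ∈ M ∧ e ≠ g) := by
      intro g hg
      rcases Finset.mem_insert.mp hg with hg | hg
      · exact Or.inl hg
      · rw [Finset.mem_erase] at hg
        exact Or.inr ⟨hg.2, Ne.symm hg.1⟩
    have hne_uw : ∀ f ∈ M, e ≠ f → f ≠ s(u, w) := by
      intro f hf hne hfeq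
      exact (claim1 f hf hne).1 (hfeq ▸ Sym2.mem_mk_left u w)
    refine ⟨M2, ⟨⟨?_, ?_⟩, ?_⟩, ?_, ?_⟩
    · intro g hg
      rcases hmemM2 g hg with rfl | ⟨hg, _⟩
      · exact G.mem_edgeSet.mpr huw
      · exact hedge g hg
    · intro e1 h1 e2 h2 hne x hx hx2
      rcases hmemM2 e1 h1 with rfl | ⟨h1', hne1⟩ <;>
        rcases hmemM2 e2 h2 with rfl | ⟨h2', hne2⟩
      · exact hne rfl
      · rcases Sym2.mem_iff.mp hx with rfl | rfl
        · exact (claim1 e2 h2' hne2).1 hx2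
        · exact (claim1 e2 h2' hne2).2 hx2
      · rcases Sym2.mem_iff.mp hx2 with rfl | rfl
        · exact (claim1 e1 h1' hne1).1 hx
        · exact (claim1 e1 h1' hne1).2 hx
      · exact hmatch e1 h1' e2 h2' hne x hx hx2
    · intro e1 h1 e2 h2 hne a ha b hb hab
      rcases hmemM2 e1 h1 with rfl | ⟨h1', hne1⟩ <;>
        rcases hmemM2 e2 h2 with rfl | ⟨h2', hne2⟩
      · exact hne rfl
      · rcases Sym2.mem_iff.mp ha with rfl | rfl
        · exact (claim2 e2 h2' hne2 b hb).1 hab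
        · exact (claim2 e2 h2' hne2 b hb).2 hab
      · rcases Sym2.mem_iff.mp hb with rfl | rfl
        · exact (claim2 e1 h1' hne1 a ha).1 hab.symm
        · exact (claim2 e1 h1' hne1 a ha).2 hab.symm
      · exact hind e1 h1' e2 h2' hne a ha b hb hab
    · intro g hg x hx
      rcases hmemM2 g hg with rfl | ⟨hg', hneg⟩
      · rcases Sym2.mem_iff.mp hx with rfl | rfl
        · exact huv.ne
        · exact hvw.ne'
      · intro hxv
        exact hvnotf g hg' hneg (hxv ▸ hx)
    · rw [hM2, Finset.card_insert_of_notMem huwnotin, Finset.card_erase_of_mem he,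
        Nat.sub_add_cancel (Finset.card_pos.mpr ⟨e, he⟩), hcard]
  · rintro ⟨M, hM, _, hcard⟩
    exact ⟨M, hM, hcard⟩
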